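/- Let f : 2^D → ℝ be a normalized, monotone, submodular set function on a finite ground set D with Δ_x(∅) > 0 for all x ∈ D, and with total curvature c = 1 − min_{x∈D} Δ_x(D∖{x})/Δ_x(∅) satisfying 0 < c ≤ 1. Let S_greedy be the output of the greedy algorithm with budget k and S* any subset with |S*| ≤ k maximizing f. Then f(S_greedy) ≥ ((1 − e^{−c})/c) · f(S*). In particular, as c → 0 the approximation factor approaches 1, and at c = 1 it equals 1 − 1/e. -/

import Mathlib

open Finset

section AuxLemmas

lemma term_le {c K : ℝ} (hc0 : 0 < c) (hc1 : c ≤ 1) (hK : 2 ≤ K) {i : ℕ}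
    (hi : (i:ℝ) ≤ K - 2) : (1 - c/K)^(i+1) ≤ (1 - c/(K-1))^i := by
  have hK0 : (0:ℝ) < K := by linarith
  have hK1 : (0:ℝ) < K - 1 := by linarith
  have ha : 0 < 1 - c/K := by
    rw [sub_pos, div_lt_one hK0]; linarith
  have hb : 0 ≤ 1 - c/(K-1) := by
    rw [sub_nonneg, div_le_one hK1]; linarith
  set a := 1 - c/K with hadef
  set b := 1 - c/(K-1) with hbdef
  have hapow : 0 < a ^ i := pow_pos ha i
  have hab : a - b = c/(K*(K-1)) := by
    rw [hadef, hbdef]; field_simp; ring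
  have h1a : 1 - a = c/K := by rw [hadef]; ring
  have key2 : (i:ℝ) * (a - b) ≤ (1 - a) * a := by
    rw [hab, h1a, hadef]
    have e1 : (i:ℝ) * (c/(K*(K-1))) = ((i:ℝ)*c)/(K*(K-1)) := by ring
    have e2 : c/K * (1 - c/K) = (c*(K-c))/(K*K) := by field_simp
    rw [e1, e2, div_le_div_iff₀ (by positivity) (by positivity)]
    have h2 : c*(K-1) ≤ K := by nlinarith
    have h3 : (K-2)*K ≤ (K-c)*(K-1) := by nlinarith
    have h4 := mul_le_mul_of_nonneg_left h3 (mul_pos hc0 hK0).le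
    have h5 := mul_le_mul_of_nonneg_right hi (mul_pos (mul_pos hc0 hK0) hK0).le
    nlinarith [h4, h5]
  have key : a ≤ (b/a)^i := by
    have hbern : 1 + (i:ℝ) * (b/a - 1) ≤ (1 + (b/a - 1))^i := by
      apply one_add_mul_le_pow
      have : (0:ℝ) ≤ b/a := div_nonneg hb ha.le
      linarith
    have heq : (i:ℝ) * (b/a - 1) = -(((i:ℝ)*(a-b))/a) := by field_simp; ring
    have h5 : ((i:ℝ)*(a-b))/a ≤ (1-a) := by
      rw [div_le_iff₀ ha]; nlinarith [key2]
    have : a ≤ 1 + (i:ℝ) * (b/a - 1) := by rw [heq]; linarith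
    calc a ≤ 1 + (i:ℝ) * (b/a - 1) := this
    _ ≤ (1 + (b/a - 1))^i := hbern
    _ = (b/a)^i := by ring_nf
  calc a^(i+1) = a * a^i := by rw [pow_succ, mul_comm]
  _ ≤ (b/a)^i * a^i := mul_le_mul_of_nonneg_right key hapow.le
  _ = b^i := by
      rw [div_pow, div_mul_eq_mul_div, mul_div_assoc, div_self (ne_of_gt hapow), mul_one]

lemma overlap_step {c K : ℝ} (hc0 : 0 < c) (hc1 : c ≤ 1) (hK : 2 ≤ K) {j : ℕ}
    (hj : (j:ℝ) + 1 ≤ K) :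
    1 - (1 - c/K)^(j+1) ≤ (1 - (1 - c/(K-1))^j) * (1 - 1/K) + c/K := by
  have hK0 : (0:ℝ) < K := by linarith
  have hK1 : (0:ℝ) < K - 1 := by linarith
  have gs : ∀ x : ℝ, 1 - x^j = (1-x) * ∑ i ∈ Finset.range j, x^i := by
    intro x; linear_combination geom_sum_mul x j
  have h1a : (1:ℝ) - (1 - c/K) = c/K := by ring
  have h1b : (1 - 1/K) * (1 - (1 - c/(K-1))) = c/K := by field_simp; ring
  have hsum : ∑ i ∈ Finset.range j, (1 - c/K)^(i+1)
      ≤ ∑ i ∈ Finset.range j, (1 - c/(K-1))^i := by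
    apply Finset.sum_le_sum
    intro i hi
    apply term_le hc0 hc1 hK
    have : (i:ℝ) + 1 ≤ (j:ℝ) := by exact_mod_cast Finset.mem_range.mp hi
    linarith
  have key : (1 - c/K) * (1 - (1 - c/K)^j) ≤ (1 - 1/K) * (1 - (1 - c/(K-1))^j) := by
    have epow : ∑ i ∈ Finset.range j, (1 - c/K)^(i+1)
        = (1 - c/K) * ∑ i ∈ Finset.range j, (1 - c/K)^i := by
      rw [Finset.mul_sum]
      apply Finset.sum_congr rfl
      intro i _
      rw [pow_succ]
      ring
    have e1 : (1 - c/K) * (1 - (1 - c/K)^j)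
        = (c/K) * ∑ i ∈ Finset.range j, (1 - c/K)^(i+1) := by
      rw [gs, h1a, epow]
      ring
    have e2 : (1 - 1/K) * (1 - (1 - c/(K-1))^j)
        = (c/K) * ∑ i ∈ Finset.range j, (1 - c/(K-1))^i := by
      rw [gs, ← mul_assoc, h1b]
    rw [e1, e2]
    exact mul_le_mul_of_nonneg_left hsum (by positivity)
  have hexp : (1 - c/K) * (1 - (1 - c/K)^j) = (1 - c/K) - (1 - c/K)^(j+1) := by
    rw [pow_succ]; ring
  nlinarith [key, hexp]


noncomputable def Yseq (w K : ℕ → ℝ) : ℕ → ℝ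
  | 0 => 0
  | j+1 => Yseq w K j + (1 - w j * Yseq w K j) / K j

variable {ι : Type*} [DecidableEq ι]

lemma chain_upper (f : Finset ι → ℝ)
    (hsub : ∀ A B : Finset ι, A ⊆ B → ∀ x ∉ B,
      f (insert x B) - f B ≤ f (insert x A) - f A)
    (A T : Finset ι) :
    f (A ∪ T) ≤ f A + ∑ o ∈ T \ A, (f (insert o A) - f A) := by
  induction T using Finset.induction_on with
  | empty => simp
  | @insert o T hoT ih =>
    by_cases hoA : o ∈ A
    · have h1 : A ∪ insert o T = A ∪ T := by
        rw [Finset.union_insert, Finset.insert_eq_self.mpr (Finset.mem_union_left T hoA)]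
      have h2 : insert o T \ A = T \ A := Finset.insert_sdiff_of_mem T hoA
      rw [h1, h2]; exact ih
    · have hoU : o ∉ A ∪ T := by simp [hoA, hoT]
      have h1 : A ∪ insert o T = insert o (A ∪ T) := Finset.union_insert o A T
      have h2 : insert o T \ A = insert o (T \ A) :=
        Finset.insert_sdiff_of_notMem T hoA
      have hoTA : o ∉ T \ A := fun h => hoT (Finset.mem_sdiff.mp h).1
      rw [h1, h2, Finset.sum_insert hoTA]
      have hstep := hsub A (A ∪ T) Finset.subset_union_left o hoU
      linarith

lemma chain_lower (f : Finset ι → ℝ) (c : ℝ)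
    (hcv : ∀ (x : ι) (A : Finset ι), x ∉ A →
      (1-c) * (f (insert x ∅) - f ∅) ≤ f (insert x A) - f A)
    (A T : Finset ι) :
    f T + (1-c) * ∑ x ∈ A \ T, (f (insert x ∅) - f ∅) ≤ f (A ∪ T) := by
  induction A using Finset.induction_on with
  | empty => simp
  | @insert y A hyA ih =>
    by_cases hyT : y ∈ T
    · have h1 : insert y A ∪ T = A ∪ T := by
        rw [Finset.insert_union, Finset.insert_eq_self.mpr (Finset.mem_union_right A hyT)]
      have h2 : insert y A \ T = A \ T := Finset.insert_sdiff_of_mem A hyT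
      rw [h1, h2]; exact ih
    · have hyU : y ∉ A ∪ T := by simp [hyA, hyT]
      have h1 : insert y A ∪ T = insert y (A ∪ T) := by rw [Finset.insert_union]
      have h2 : insert y A \ T = insert y (A \ T) :=
        Finset.insert_sdiff_of_notMem A hyT
      have hyAT : y ∉ A \ T := fun h => hyA (Finset.mem_sdiff.mp h).1
      rw [h1, h2, Finset.sum_insert hyAT, mul_add]
      have hstep := hcv y (A ∪ T) hyU
      linarith

lemma split_bound (f : Finset ι → ℝ)
    (hsub : ∀ A B : Finset ι, A ⊆ B → ∀ x ∉ B,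
      f (insert x B) - f B ≤ f (insert x A) - f A)
    (B C : Finset ι) :
    f B ≤ f (B ∩ C) + ∑ x ∈ B \ C, (f (insert x ∅) - f ∅) := by
  have h1 := chain_upper f hsub (B ∩ C) B
  have h2 : (B ∩ C) ∪ B = B := Finset.union_eq_right.mpr Finset.inter_subset_left
  have h3 : B \ (B ∩ C) = B \ C := Finset.sdiff_inter_self_left B C
  rw [h2, h3] at h1
  have h4 : ∑ o ∈ B \ C, (f (insert o (B ∩ C)) - f (B ∩ C))
      ≤ ∑ o ∈ B \ C, (f (insert o ∅) - f ∅) := by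
    apply Finset.sum_le_sum
    intro o ho
    have hoBC : o ∉ B ∩ C := by
      intro h
      exact (Finset.mem_sdiff.mp ho).2 (Finset.mem_inter.mp h).2
    exact hsub ∅ (B ∩ C) (Finset.empty_subset _) o hoBC
  linarith

end AuxLemmas

/-- Curvature-dependent greedy guarantee: for a normalized,
monotone, submodular `f` with positive singleton gains and total curvature
`c = 1 − min_x Δ_x(D∖{x})/Δ_x(∅)` satisfying `0 < c ≤ 1`, greedy with budget `k`
achieves `f(S_greedy) ≥ ((1 − e^{−c})/c) · f(S*)`.  As `c → 0⁺` the factor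
approaches `1`, and at `c = 1` it equals `1 − 1/e`. -/
theorem greedy_curvature_guarantee
    {ι : Type*} [Fintype ι] [DecidableEq ι] [Nonempty ι]
    (f : Finset ι → ℝ)
    (hnorm : f ∅ = 0)
    (hmono : ∀ A B : Finset ι, A ⊆ B → f A ≤ f B)
    (hsub : ∀ A B : Finset ι, A ⊆ B → ∀ x ∉ B,
      f (insert x B) - f B ≤ f (insert x A) - f A)
    (hpos : ∀ x : ι, 0 < f (insert x ∅) - f ∅)
    (c : ℝ)
    (hc : c = 1 - ⨅ x : ι,
      (f (insert x (Finset.univ.erase x)) - f (Finset.univ.erase x)) /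
        (f (insert x ∅) - f ∅))
    (hc0 : 0 < c) (hc1 : c ≤ 1)
    (k : ℕ) (hk : 1 ≤ k)
    (S : ℕ → Finset ι) (hS0 : S 0 = ∅)
    (hgreedy : ∀ t < k, ∃ x ∉ S t, S (t + 1) = insert x (S t) ∧
      ∀ y ∉ S t, f (insert y (S t)) - f (S t) ≤ f (insert x (S t)) - f (S t))
    (Sstar : Finset ι) (hcard : Sstar.card ≤ k)
    (hopt : ∀ T : Finset ι, T.card ≤ k → f T ≤ f Sstar) :
    f (S k) ≥ ((1 - Real.exp (-c)) / c) * f Sstar ∧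
    Filter.Tendsto (fun t : ℝ => (1 - Real.exp (-t)) / t)
      (nhdsWithin 0 (Set.Ioi 0)) (nhds 1) ∧
    (1 - Real.exp (-(1 : ℝ))) / 1 = 1 - 1 / Real.exp 1 := by
  refine ⟨?_, ?_, ?_⟩
  · -- the greedy guarantee
    have h1c : 0 ≤ 1 - c := by linarith
    -- curvature inequality
    have hcv : ∀ (x : ι) (A : Finset ι), x ∉ A →
        (1-c) * (f (insert x ∅) - f ∅) ≤ f (insert x A) - f A := by
      intro x A hxA
      have hinf : (1 : ℝ) - c ≤ (f (insert x (Finset.univ.erase x)) - f (Finset.univ.erase x))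
          / (f (insert x ∅) - f ∅) := by
        have he : (1:ℝ) - c = ⨅ x : ι,
            (f (insert x (Finset.univ.erase x)) - f (Finset.univ.erase x)) /
              (f (insert x ∅) - f ∅) := by rw [hc]; ring
        rw [he]
        exact ciInf_le (Finite.bddBelow_range _) x
      have h2 := (le_div_iff₀ (hpos x)).mp hinf
      have h3 : A ⊆ Finset.univ.erase x := by
        intro y hy
        rw [Finset.mem_erase]
        exact ⟨fun he => hxA (he ▸ hy), Finset.mem_univ y⟩
      have h4 := hsub A (Finset.univ.erase x) h3 x (Finset.notMem_erase x _)
      linarith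
    have hcardS : ∀ t, t ≤ k → (S t).card = t := by
      intro t
      induction t with
      | zero => intro _; rw [hS0]; simp
      | succ n ih =>
        intro hn
        obtain ⟨x, hx, hS1, -⟩ := hgreedy n (by omega)
        rw [hS1, Finset.card_insert_of_notMem hx, ih (by omega)]
    set F : ℕ → ℝ := fun t => f (S t) with hF
    set A : ℕ → ℝ := fun t => ∑ i ∈ Finset.range t,
      (if S (i+1) ⊆ Sstar ∪ S i then F (i+1) - F i else 0) with hA
    set pot : ℕ → ℝ := fun t => c * F t + (1-c) * A t with hpot
    set KK : ℕ → ℝ := fun t => (k:ℝ) - (Sstar ∩ S t).card with hKK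
    set W : ℕ → ℝ := fun t => if S (t+1) ⊆ Sstar ∪ S t then 1 else c with hW
    have hA0 : A 0 = 0 := by simp [hA]
    have hAsucc : ∀ t, A (t+1) = A t + (if S (t+1) ⊆ Sstar ∪ S t then F (t+1) - F t else 0) := by
      intro t
      simp only [hA, Finset.sum_range_succ]
    have hH : ∀ t, t ≤ k → F t - A t ≤ ∑ x ∈ S t \ Sstar, (f (insert x ∅) - f ∅) := by
      intro t
      induction t with
      | zero =>
        intro _
        rw [hA0, hS0]
        simp only [hF, hS0, hnorm]
        simp
      | succ n ih =>
        intro hn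
        have ihn := ih (by omega)
        obtain ⟨x, hx, hS1, -⟩ := hgreedy n (by omega)
        by_cases hxS : x ∈ Sstar
        · have hcond : S (n+1) ⊆ Sstar ∪ S n := by
            rw [hS1]
            exact Finset.insert_subset (Finset.mem_union_left _ hxS) Finset.subset_union_right
          have hAs : A (n+1) = A n + (F (n+1) - F n) := by
            rw [hAsucc n, if_pos hcond]
          have hset : S (n+1) \ Sstar = S n \ Sstar := by
            rw [hS1, Finset.insert_sdiff_of_mem _ hxS]
          rw [hAs, hset]
          linarith
        · have hcond : ¬ (S (n+1) ⊆ Sstar ∪ S n) := by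
            intro hsubset
            have : x ∈ Sstar ∪ S n := hsubset (by rw [hS1]; exact Finset.mem_insert_self x _)
            rcases Finset.mem_union.mp this with h | h
            · exact hxS h
            · exact hx h
          have hAs : A (n+1) = A n := by
            rw [hAsucc n, if_neg hcond]
            ring
          have hxSd : x ∉ S n \ Sstar := fun h => hx (Finset.mem_sdiff.mp h).1
          have hset : S (n+1) \ Sstar = insert x (S n \ Sstar) := by
            rw [hS1, Finset.insert_sdiff_of_notMem _ hxS]
          have hmarg : F (n+1) - F n ≤ f (insert x ∅) - f ∅ := by
            have h5 := hsub ∅ (S n) (Finset.empty_subset _) x hx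
            simp only [hF, hS1]
            linarith
          rw [hAs, hset, Finset.sum_insert hxSd]
          linarith
    have hstep : ∀ t, t < k →
        (f Sstar ≤ pot t + KK t * (F (t+1) - F t)) ∧
        (pot (t+1) = pot t + W t * (F (t+1) - F t)) ∧
        ((W t = 1 ∧ KK (t+1) = KK t - 1) ∨ (W t = c ∧ KK (t+1) = KK t)) ∧
        0 ≤ F (t+1) - F t := by
      intro t ht
      obtain ⟨x, hx, hS1, hmax⟩ := hgreedy t ht
      have hrho0 : 0 ≤ F (t+1) - F t := by
        have h5 := hmono (S t) (S (t+1)) (by rw [hS1]; exact Finset.subset_insert x _)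
        simp only [hF]
        linarith
      have hrho : F (t+1) - F t = f (insert x (S t)) - f (S t) := by
        simp only [hF, hS1]
      have hup := chain_upper f hsub (S t) Sstar
      have hsum1 : ∑ o ∈ Sstar \ S t, (f (insert o (S t)) - f (S t))
          ≤ (Sstar \ S t).card • (F (t+1) - F t) := by
        apply Finset.sum_le_card_nsmul
        intro o ho
        rw [hrho]
        exact hmax o (Finset.mem_sdiff.mp ho).2
      have hm : (Sstar ∩ S t).card ≤ t :=
        le_trans (Finset.card_le_card Finset.inter_subset_right)
          (le_of_eq (hcardS t (le_of_lt ht)))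
      have hcards : ((Sstar \ S t).card : ℝ) ≤ KK t := by
        have h6 : (Sstar \ S t).card + (Sstar ∩ S t).card = Sstar.card :=
          Finset.card_sdiff_add_card_inter _ _
        simp only [hKK]
        have h7 : ((Sstar \ S t).card : ℝ) + ((Sstar ∩ S t).card : ℝ) ≤ (k:ℝ) := by
          exact_mod_cast (show (Sstar \ S t).card + (Sstar ∩ S t).card ≤ k by omega)
        linarith
      have hsum2 : ((Sstar \ S t).card : ℝ) * (F (t+1) - F t) ≤ KK t * (F (t+1) - F t) :=
        mul_le_mul_of_nonneg_right hcards hrho0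
      have hsmul : ((Sstar \ S t).card) • (F (t+1) - F t)
          = ((Sstar \ S t).card : ℝ) * (F (t+1) - F t) := nsmul_eq_mul _ _
      have hunion : f (S t ∪ Sstar) ≤ F t + KK t * (F (t+1) - F t) := by
        simp only [hF]
        linarith [hup, hsum1, hsum2, hsmul.symm.le, hsmul.le]
      have hlow := chain_lower f c hcv (S t) Sstar
      have hmul : (1-c) * (F t - A t)
          ≤ (1-c) * ∑ x ∈ S t \ Sstar, (f (insert x ∅) - f ∅) :=
        mul_le_mul_of_nonneg_left (hH t (le_of_lt ht)) h1c
      refine ⟨?_, ?_, ?_, hrho0⟩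
      · simp only [hpot]
        linarith [hunion, hlow, hmul]
      · by_cases hxS : x ∈ Sstar
        · have hcond : S (t+1) ⊆ Sstar ∪ S t := by
            rw [hS1]
            exact Finset.insert_subset (Finset.mem_union_left _ hxS) Finset.subset_union_right
          have hWt : W t = 1 := by simp only [hW]; exact if_pos hcond
          have hAs : A (t+1) = A t + (F (t+1) - F t) := by
            rw [hAsucc t, if_pos hcond]
          simp only [hpot, hWt, hAs]
          ring
        · have hcond : ¬ (S (t+1) ⊆ Sstar ∪ S t) := by
            intro hsubset
            have : x ∈ Sstar ∪ S t := hsubset (by rw [hS1]; exact Finset.mem_insert_self x _)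
            rcases Finset.mem_union.mp this with h | h
            · exact hxS h
            · exact hx h
          have hWt : W t = c := by simp only [hW]; exact if_neg hcond
          have hAs : A (t+1) = A t := by
            rw [hAsucc t, if_neg hcond]
            ring
          simp only [hpot, hWt, hAs]
          ring
      · by_cases hxS : x ∈ Sstar
        · left
          constructor
          · simp only [hW]
            apply if_pos
            rw [hS1]
            exact Finset.insert_subset (Finset.mem_union_left _ hxS) Finset.subset_union_right
          · have hKstep : (Sstar ∩ S (t+1)).card = (Sstar ∩ S t).card + 1 := by
              rw [hS1, Finset.inter_insert_of_mem hxS,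
                Finset.card_insert_of_notMem (fun h => hx (Finset.mem_inter.mp h).2)]
            simp only [hKK, hKstep]
            push_cast
            ring
        · right
          constructor
          · simp only [hW]
            apply if_neg
            intro hsubset
            have : x ∈ Sstar ∪ S t := hsubset (by rw [hS1]; exact Finset.mem_insert_self x _)
            rcases Finset.mem_union.mp this with h | h
            · exact hxS h
            · exact hx h
          · have hKstep : (Sstar ∩ S (t+1)) = (Sstar ∩ S t) := by
              rw [hS1, Finset.inter_insert_of_notMem hxS]
            simp only [hKK, hKstep]
    -- reindexed sequences
    set wj : ℕ → ℝ := fun j => W (k - j - 1) with hwj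
    set Kj : ℕ → ℝ := fun j => KK (k - j - 1) with hKj
    set Y : ℕ → ℝ := Yseq wj Kj with hY
    have hY0 : Y 0 = 0 := rfl
    have hYsucc : ∀ n, Y (n+1) = Y n + (1 - wj n * Y n) / Kj n := fun n => rfl
    have hKjpos : ∀ j, j < k → (j:ℝ) + 1 ≤ Kj j := by
      intro j hj
      have hm : (Sstar ∩ S (k-j-1)).card ≤ k - j - 1 :=
        le_trans (Finset.card_le_card Finset.inter_subset_right)
          (le_of_eq (hcardS _ (by omega)))
      have hm2 : ((Sstar ∩ S (k-j-1)).card : ℝ) + ((j:ℝ) + 1) ≤ (k:ℝ) := by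
        exact_mod_cast (show (Sstar ∩ S (k-j-1)).card + (j + 1) ≤ k by omega)
      simp only [hKj, hKK]
      linarith
    have hwbd : ∀ t', 0 ≤ W t' ∧ W t' ≤ 1 := by
      intro t'
      simp only [hW]
      split <;> constructor <;> linarith
    have I1 : ∀ j, j ≤ k → 0 ≤ Y j ∧ Y j ≤ 1 ∧ Y j * Kj (j-1) ≤ (j:ℝ) := by
      intro j
      induction j with
      | zero =>
        intro _
        refine ⟨le_of_eq hY0.symm, by rw [hY0]; norm_num, by rw [hY0]; norm_num⟩
      | succ n ih =>
        intro hn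
        obtain ⟨hYn0, hYn1, hYK⟩ := ih (by omega)
        have ht : k - n - 1 < k := by omega
        have hdich := (hstep (k-n-1) ht).2.2.1
        have hKn : (n:ℝ) + 1 ≤ Kj n := hKjpos n (by omega)
        have hKn0 : 0 < Kj n := by
          have : (0:ℝ) ≤ (n:ℝ) := Nat.cast_nonneg n
          linarith
    
        have hwn : 0 ≤ wj n ∧ wj n ≤ 1 := by simp only [hwj]; exact hwbd _
        have hfeas : wj n * Y n ≤ 1 := by
          calc wj n * Y n ≤ 1 * 1 := mul_le_mul hwn.2 hYn1 hYn0 zero_le_one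
          _ = 1 := mul_one 1
        have hYsn0 : 0 ≤ Y (n+1) := by
          rw [hYsucc n]
          have : 0 ≤ (1 - wj n * Y n)/Kj n := div_nonneg (by linarith) hKn0.le
          linarith
        have hKmul : Y (n+1) * Kj n = Y n * Kj n + (1 - wj n * Y n) := by
          rw [hYsucc n]
          field_simp
        have hbound : Y (n+1) * Kj n ≤ (n:ℝ) + 1 := by
          rcases Nat.eq_zero_or_pos n with hn0 | hn1
          · subst hn0
            rw [hKmul, hY0]
            norm_num
          · rcases hdich with ⟨h1, h2⟩ | ⟨h1, h2⟩
            · have hw1 : wj n = 1 := by simp only [hwj]; exact h1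
              have hidx : k - n - 1 + 1 = k - n := by omega
              rw [hidx] at h2
              have hKrel : Kj (n-1) = Kj n - 1 := by
                have e3 : k - (n - 1) - 1 = k - n := by omega
                have e2 : Kj (n-1) = KK (k - n) := by
                  simp only [hKj, e3]
                rw [e2, h2]
              rw [hKrel] at hYK
              have hexp : Y n * (Kj n - 1) = Y n * Kj n - Y n := by ring
              rw [hKmul, hw1]
              rw [hexp] at hYK
              linarith
            · have hwc : wj n = c := by simp only [hwj]; exact h1
              have hidx : k - n - 1 + 1 = k - n := by omega
              rw [hidx] at h2
              have hKrel : Kj (n-1) = Kj n := by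
                have e3 : k - (n - 1) - 1 = k - n := by omega
                have e2 : Kj (n-1) = KK (k - n) := by
                  simp only [hKj, e3]
                rw [e2, h2]
              rw [hKrel] at hYK
              rw [hKmul, hwc]
              have : 0 ≤ c * Y n := mul_nonneg hc0.le hYn0
              linarith
        have hYsn1 : Y (n+1) ≤ 1 := by
          nlinarith [hbound, hKn, hYsn0]
        refine ⟨hYsn0, hYsn1, ?_⟩
        have : (n+1) - 1 = n := by omega
        rw [this]
        push_cast
        exact hbound

    have I2 : ∀ j, j ≤ k → 1 - (1 - c / Kj (j-1)) ^ j ≤ c * Y j := by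
      intro j
      induction j with
      | zero =>
        intro _
        rw [hY0]
        norm_num
      | succ n ih =>
        intro hn
        have ht : k - n - 1 < k := by omega
        have hdich := (hstep (k-n-1) ht).2.2.1
        have hKn : (n:ℝ) + 1 ≤ Kj n := hKjpos n (by omega)
        have hKn0 : 0 < Kj n := by
          have : (0:ℝ) ≤ (n:ℝ) := Nat.cast_nonneg n
          linarith
        have hsimp : n + 1 - 1 = n := by omega
        rw [hsimp]
        rcases Nat.eq_zero_or_pos n with hn0 | hn1
        · subst hn0
          have hY1 : Y 1 = 1/Kj 0 := by
            rw [hYsucc 0, hY0]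
            simp
          rw [hY1, pow_one]
          rw [mul_one_div]
          linarith
        · have ihn := ih (by omega)
          obtain ⟨hYn0, hYn1, -⟩ := I1 n (by omega)
          rcases hdich with ⟨h1, h2⟩ | ⟨h1, h2⟩
          · -- overlap step
            have hw1 : wj n = 1 := by simp only [hwj]; exact h1
            have hidx : k - n - 1 + 1 = k - n := by omega
            rw [hidx] at h2
            have hKrel : Kj (n-1) = Kj n - 1 := by
              have e3 : k - (n - 1) - 1 = k - n := by omega
              have e2 : Kj (n-1) = KK (k - n) := by
                simp only [hKj, e3]
              rw [e2, h2]
            rw [hKrel] at ihn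
            have hn1' : (1:ℝ) ≤ (n:ℝ) := by exact_mod_cast hn1
            have hK2 : 2 ≤ Kj n := by linarith
            have hob := overlap_step hc0 hc1 hK2 hKn
            have hr0 : 0 ≤ 1 - 1/Kj n := by
              rw [sub_nonneg, div_le_one hKn0]
              linarith
            calc 1 - (1 - c/Kj n)^(n+1)
                ≤ (1 - (1 - c/(Kj n - 1))^n) * (1 - 1/Kj n) + c/Kj n := hob
            _ ≤ (c * Y n) * (1 - 1/Kj n) + c/Kj n :=
                  add_le_add_left (mul_le_mul_of_nonneg_right ihn hr0) _
            _ = c * Y (n+1) := by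
                  rw [hYsucc n, hw1]; field_simp; ring
          · -- non-overlap step
            have hwc : wj n = c := by simp only [hwj]; exact h1
            have hidx : k - n - 1 + 1 = k - n := by omega
            rw [hidx] at h2
            have hKrel : Kj (n-1) = Kj n := by
              have e3 : k - (n - 1) - 1 = k - n := by omega
              have e2 : Kj (n-1) = KK (k - n) := by
                simp only [hKj, e3]
              rw [e2, h2]
            rw [hKrel] at ihn
            have ha0 : 0 ≤ 1 - c/Kj n := by
              rw [sub_nonneg, div_le_one hKn0]
              linarith
            calc 1 - (1 - c/Kj n)^(n+1)
                = (1 - (1 - c/Kj n)^n) * (1 - c/Kj n) + (1 - (1 - c/Kj n)) := by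
                  rw [pow_succ]; ring
            _ ≤ (c * Y n) * (1 - c/Kj n) + (1 - (1 - c/Kj n)) :=
                  add_le_add_left (mul_le_mul_of_nonneg_right ihn ha0) _
            _ = c * Y (n+1) := by
                  rw [hYsucc n, hwc]; field_simp; ring

    have MAIN : ∀ j, j ≤ k → Y j * (f Sstar - pot (k - j)) ≤ F k - F (k - j) := by
      intro j
      induction j with
      | zero =>
        intro _
        rw [hY0, Nat.sub_zero]
        norm_num
      | succ n ih =>
        intro hn
        have ihn := ih (by omega)
        have ht : k - (n+1) < k := by omega
        have ht1 : k - n = (k - (n+1)) + 1 := by omega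
        rw [ht1] at ihn
        obtain ⟨hgrd, hpU, hdich, hrho0⟩ := hstep (k - (n+1)) ht
        have hKjn : Kj n = KK (k - (n+1)) := by
          have e3 : k - n - 1 = k - (n+1) := by omega
          simp only [hKj, e3]
        have hwjn : wj n = W (k - (n+1)) := by
          have e3 : k - n - 1 = k - (n+1) := by omega
          simp only [hwj, e3]
        have hKn : (n:ℝ) + 1 ≤ Kj n := hKjpos n (by omega)
        have hKn0 : 0 < Kj n := by
          have : (0:ℝ) ≤ (n:ℝ) := Nat.cast_nonneg n
          linarith
        obtain ⟨hYn0, hYn1, -⟩ := I1 n (by omega)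
        have hwn : 0 ≤ W (k - (n+1)) ∧ W (k - (n+1)) ≤ 1 := hwbd _
        have hfeas : 0 ≤ 1 - W (k - (n+1)) * Y n := by
          have : W (k - (n+1)) * Y n ≤ 1 * 1 := mul_le_mul hwn.2 hYn1 hYn0 zero_le_one
          linarith
        set t' := k - (n+1) with ht'
        have h2 : Y n * (f Sstar - pot t' - W t' * (F (t'+1) - F t'))
            = Y n * (f Sstar - pot (t'+1)) := by
          rw [hpU]
          ring
        have hgrd' : f Sstar - pot t' ≤ KK t' * (F (t'+1) - F t') := by linarith
        have h4 : (1 - W t' * Y n)/Kj n * (f Sstar - pot t')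
            ≤ (1 - W t' * Y n) * (F (t'+1) - F t') := by
          rw [div_mul_eq_mul_div, div_le_iff₀ hKn0]
          calc (1 - W t' * Y n) * (f Sstar - pot t')
              ≤ (1 - W t' * Y n) * (KK t' * (F (t'+1) - F t')) :=
                mul_le_mul_of_nonneg_left hgrd' hfeas
          _ = (1 - W t' * Y n) * (F (t'+1) - F t') * Kj n := by
                rw [hKjn]; ring
        calc Y (n+1) * (f Sstar - pot t')
            = Y n * (f Sstar - pot t' - W t' * (F (t'+1) - F t'))
              + (1 - W t' * Y n)/Kj n * (f Sstar - pot t')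
              + Y n * (W t' * (F (t'+1) - F t')) := by
              rw [hYsucc n, hwjn]; ring
        _ ≤ (F k - F (t'+1)) + (1 - W t' * Y n) * (F (t'+1) - F t')
              + Y n * (W t' * (F (t'+1) - F t')) := by
              rw [h2]
              exact add_le_add (add_le_add ihn h4) (le_refl _)
        _ = F k - F t' := by ring
    -- final assembly
    have hM := MAIN k le_rfl
    rw [Nat.sub_self] at hM
    have hpot0 : pot 0 = 0 := by
      simp only [hpot, hF, hS0, hnorm, hA0]
      ring
    have hF00 : F 0 = 0 := by simp only [hF, hS0, hnorm]
    rw [hpot0, hF00] at hM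
    have hI2 := I2 k le_rfl
    have hKjk : Kj (k-1) = (k:ℝ) := by
      have e3 : k - (k - 1) - 1 = 0 := by omega
      simp only [hKj, hKK, e3, hS0, Finset.inter_empty, Finset.card_empty]
      simp
    rw [hKjk] at hI2
    have hk0 : (0:ℝ) < (k:ℝ) := by exact_mod_cast hk
    have hq : (1 - c/(k:ℝ))^k ≤ Real.exp (-c) := by
      have h7 : 1 - c/(k:ℝ) ≤ Real.exp (-(c/(k:ℝ))) := by
        have := Real.add_one_le_exp (-(c/(k:ℝ)))
        linarith
      have h8 : 0 ≤ 1 - c/(k:ℝ) := by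
        rw [sub_nonneg, div_le_one hk0]
        have : (1:ℝ) ≤ (k:ℝ) := by exact_mod_cast hk
        linarith
      calc (1 - c/(k:ℝ))^k ≤ (Real.exp (-(c/(k:ℝ))))^k := pow_le_pow_left₀ h8 h7 k
      _ = Real.exp (-c) := by
          rw [← Real.exp_nat_mul]
          congr 1
          field_simp
    have hYk : (1 - Real.exp (-c))/c ≤ Y k := by
      rw [div_le_iff₀ hc0, mul_comm]
      exact le_trans (by linarith [hq]) hI2
    have hfstar : 0 ≤ f Sstar := by
      have := hmono ∅ Sstar (Finset.empty_subset _)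
      linarith
    rw [ge_iff_le]
    calc ((1 - Real.exp (-c))/c) * f Sstar ≤ Y k * f Sstar :=
          mul_le_mul_of_nonneg_right hYk hfstar
    _ ≤ f (S k) := by
          have : F k = f (S k) := rfl
          linarith [hM]

  · -- limit as c → 0⁺
    have h1 : HasDerivAt (fun t : ℝ => 1 - Real.exp (-t)) 1 0 := by
      have h0 : HasDerivAt (fun t : ℝ => -t) (-1) 0 := (hasDerivAt_id 0).neg
      have h2 := (Real.hasDerivAt_exp (-0)).comp 0 h0
      have h3 := h2.const_sub 1
      simpa using h3
    have h4 := hasDerivAt_iff_tendsto_slope.mp h1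
    have h5 : Set.Ioi (0:ℝ) ⊆ {(0:ℝ)}ᶜ := by
      intro x hx
      simp only [Set.mem_Ioi] at hx
      simp only [Set.mem_compl_iff, Set.mem_singleton_iff]
      linarith
    have h6 := h4.mono_left (nhdsWithin_mono 0 h5)
    refine h6.congr' ?_
    filter_upwards [self_mem_nhdsWithin] with x hx
    simp only [Set.mem_Ioi] at hx
    rw [slope_def_field]
    field_simp
    rw [neg_zero, Real.exp_zero]; ring
  · -- value at c = 1
    rw [Real.exp_neg]
    ring
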